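/- (Lemma 1, main identity.) Let τ be a tracial functional on A and let a = (a_k), b = (b_k), c = (c_k) ∈ Aⁿ with a divergence-free for τ. Then Σ_{j=1}^n τ((D_a b_j)·c_j) − Σ_{j=1}^n τ((D_b a_j)·c_j) = −Σ_{k=1}^n τ((D_a c_k + Σ_{j=1}^n Θ_{k,c_j}(a_j))·b_k). -/

import Mathlib

open scoped TensorProduct

noncomputable section

/-- The free algebra `A = ℂ⟨X₁,…,Xₙ⟩` on `n` generators. -/
abbrev FA (n : ℕ) := FreeAlgebra ℂ (Fin n)

/-- The generator `X i`. -/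
def X {n : ℕ} (i : Fin n) : FA n := FreeAlgebra.ι ℂ i

/-- The monomial `X_{i₁} ⋯ X_{i_m}` associated to a list of indices. -/
def mono {n : ℕ} (l : List (Fin n)) : FA n := (l.map X).prod

lemma mono_nil {n : ℕ} : mono ([] : List (Fin n)) = 1 := rfl

lemma mono_single {n : ℕ} (i : Fin n) : mono [i] = FreeAlgebra.ι ℂ i := by
  simp [mono, X]

lemma mono_append {n : ℕ} (l₁ l₂ : List (Fin n)) :
    mono (l₁ ++ l₂) = mono l₁ * mono l₂ := by
  simp [mono]

lemma span_mono {n : ℕ} :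
    Submodule.span ℂ (Set.range (mono (n := n))) = ⊤ := by
  rw [eq_top_iff]
  rintro x -
  induction x using FreeAlgebra.induction with
  | grade0 r =>
      have : (algebraMap ℂ (FA n)) r = r • mono ([] : List (Fin n)) := by
        simp [mono_nil, Algebra.algebraMap_eq_smul_one]
      rw [this]
      exact Submodule.smul_mem _ _ (Submodule.subset_span ⟨[], rfl⟩)
  | grade1 i => exact Submodule.subset_span ⟨[i], mono_single i⟩
  | mul p q hp hq =>
      induction hp using Submodule.span_induction with
      | mem p hp =>
          obtain ⟨l₁, rfl⟩ := hp
          induction hq using Submodule.span_induction with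
          | mem q hq =>
              obtain ⟨l₂, rfl⟩ := hq
              exact Submodule.subset_span ⟨l₁ ++ l₂, mono_append l₁ l₂⟩
          | zero => simp
          | add q r _ _ hq hr => rw [mul_add]; exact Submodule.add_mem _ hq hr
          | smul r q _ hq => rw [mul_smul_comm]; exact Submodule.smul_mem _ _ hq
      | zero => simp
      | add p r _ _ hp hr => rw [add_mul]; exact Submodule.add_mem _ hp hr
      | smul r p _ hp => rw [smul_mul_assoc]; exact Submodule.smul_mem _ _ hp
  | add p q hp hq => exact Submodule.add_mem _ hp hq

lemma ext_mono {n : ℕ} {M : Type*} [AddCommMonoid M] [Module ℂ M]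
    {f g : FA n →ₗ[ℂ] M} (h : ∀ l, f (mono l) = g (mono l)) : f = g :=
  LinearMap.ext_on span_mono (by rintro x ⟨l, rfl⟩; exact h l)
lemma D_append {n : ℕ} (D : (Fin n → FA n) → (FA n →ₗ[ℂ] FA n))
    (hD : ∀ (b : Fin n → FA n) (l : List (Fin n)),
      D b (mono l) = ∑ k : Fin l.length,
        mono (l.take k.val) * b (l.get k) * mono (l.drop (k.val + 1)))
    (b : Fin n → FA n) (l₁ l₂ : List (Fin n)) :
    D b (mono (l₁ ++ l₂)) = D b (mono l₁) * mono l₂ + mono l₁ * D b (mono l₂) := by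
  have hlen : l₁.length + l₂.length = (l₁ ++ l₂).length := by simp
  rw [hD, hD, hD, ← Fin.sum_congr' _ hlen, Fin.sum_univ_add,
    Finset.sum_mul, Finset.mul_sum]
  congr 1
  · apply Finset.sum_congr rfl
    intro i _
    have h1 : (l₁ ++ l₂).take ((Fin.cast hlen (Fin.castAdd l₂.length i)).val)
        = l₁.take i.val := List.take_append_of_le_length (le_of_lt i.isLt)
    have h2 : (l₁ ++ l₂).get (Fin.cast hlen (Fin.castAdd l₂.length i)) = l₁.get i := by
      simp [List.get_eq_getElem, List.getElem_append_left i.isLt]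
    have h3 : (l₁ ++ l₂).drop ((Fin.cast hlen (Fin.castAdd l₂.length i)).val + 1)
        = l₁.drop (i.val + 1) ++ l₂ := List.drop_append_of_le_length i.isLt
    rw [h1, h2, h3, mono_append, ← mul_assoc]
  · apply Finset.sum_congr rfl
    intro i _
    have hv : (Fin.cast hlen (Fin.natAdd l₁.length i)).val = l₁.length + i.val := rfl
    have h1 : (l₁ ++ l₂).take (l₁.length + i.val) = l₁ ++ l₂.take i.val :=
      List.take_length_add_append i.val
    have h2 : (l₁ ++ l₂).get (Fin.cast hlen (Fin.natAdd l₁.length i)) = l₂.get i := by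
      simp [List.get_eq_getElem, List.getElem_append_right (Nat.le_add_right l₁.length i.val)]
    have h3 : (l₁ ++ l₂).drop (l₁.length + i.val + 1) = l₂.drop (i.val + 1) := by
      rw [Nat.add_assoc]; exact List.drop_length_add_append (i.val + 1)
    rw [hv, h1, h2, h3, mono_append, mul_assoc, mul_assoc, mul_assoc]
lemma D_mul {n : ℕ} (D : (Fin n → FA n) → (FA n →ₗ[ℂ] FA n))
    (hD : ∀ (b : Fin n → FA n) (l : List (Fin n)),
      D b (mono l) = ∑ k : Fin l.length,
        mono (l.take k.val) * b (l.get k) * mono (l.drop (k.val + 1)))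
    (b : Fin n → FA n) (P Q : FA n) :
    D b (P * Q) = D b P * Q + P * D b Q := by
  have h1 : ∀ (l₁ : List (Fin n)) (Q : FA n),
      D b (mono l₁ * Q) = D b (mono l₁) * Q + mono l₁ * D b Q := by
    intro l₁ Q
    have e : (D b).comp (LinearMap.mulLeft ℂ (mono l₁))
        = LinearMap.mulLeft ℂ (D b (mono l₁)) + (LinearMap.mulLeft ℂ (mono l₁)).comp (D b) := by
      apply ext_mono
      intro l₂
      simp only [LinearMap.comp_apply, LinearMap.add_apply, LinearMap.mulLeft_apply,
        ← mono_append]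
      exact D_append D hD b l₁ l₂
    simpa using LinearMap.congr_fun e Q
  have e : (D b).comp (LinearMap.mulRight ℂ Q)
      = (LinearMap.mulRight ℂ Q).comp (D b) + LinearMap.mulRight ℂ (D b Q) := by
    apply ext_mono
    intro l₁
    simp only [LinearMap.comp_apply, LinearMap.add_apply, LinearMap.mulRight_apply]
    exact h1 l₁ Q
  simpa using LinearMap.congr_fun e P
lemma tau_D_zero {n : ℕ} (τ : FA n →ₗ[ℂ] ℂ)
    (htr : ∀ P Q : FA n, τ (P * Q) = τ (Q * P))
    (δ : Fin n → (FA n →ₗ[ℂ] FA n))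
    (hδ : ∀ (j : Fin n) (l : List (Fin n)),
      δ j (mono l) = ∑ k : Fin l.length,
        if l.get k = j then mono (l.drop (k.val + 1)) * mono (l.take k.val) else 0)
    (D : (Fin n → FA n) → (FA n →ₗ[ℂ] FA n))
    (hD : ∀ (b : Fin n → FA n) (l : List (Fin n)),
      D b (mono l) = ∑ k : Fin l.length,
        mono (l.take k.val) * b (l.get k) * mono (l.drop (k.val + 1)))
    (a : Fin n → FA n)
    (ha : ∀ R : FA n, ∑ j : Fin n, τ (a j * δ j R) = 0) (R : FA n) :
    τ (D a R) = 0 := by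
  have e : τ.comp (D a) = 0 := by
    apply ext_mono
    intro l
    simp only [LinearMap.comp_apply, LinearMap.zero_apply]
    rw [hD, map_sum]
    have hterm : ∀ k : Fin l.length,
        τ (mono (l.take k.val) * a (l.get k) * mono (l.drop (k.val + 1)))
          = τ (a (l.get k) * (mono (l.drop (k.val + 1)) * mono (l.take k.val))) := by
      intro k
      rw [mul_assoc, htr, mul_assoc]
    rw [Finset.sum_congr rfl (fun k _ => hterm k)]
    have h0 := ha (mono l)
    simp only [hδ, Finset.mul_sum, mul_ite, mul_zero, map_sum, apply_ite τ, map_zero] at h0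
    rw [Finset.sum_comm] at h0
    simp only [Finset.sum_ite_eq, Finset.mem_univ, if_true] at h0
    exact h0
  exact LinearMap.congr_fun e R

lemma tau_Db_theta {n : ℕ} (τ : FA n →ₗ[ℂ] ℂ)
    (htr : ∀ P Q : FA n, τ (P * Q) = τ (Q * P))
    (D : (Fin n → FA n) → (FA n →ₗ[ℂ] FA n))
    (hD : ∀ (b : Fin n → FA n) (l : List (Fin n)),
      D b (mono l) = ∑ k : Fin l.length,
        mono (l.take k.val) * b (l.get k) * mono (l.drop (k.val + 1)))
    (Θ : Fin n → FA n → (FA n →ₗ[ℂ] FA n))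
    (hΘ : ∀ (k : Fin n) (c : FA n) (l : List (Fin n)),
      Θ k c (mono l) = ∑ p : Fin l.length,
        if l.get p = k then mono (l.drop (p.val + 1)) * c * mono (l.take p.val) else 0)
    (b : Fin n → FA n) (γ α : FA n) :
    τ (D b α * γ) = ∑ k : Fin n, τ (Θ k γ α * b k) := by
  have e : τ.comp ((LinearMap.mulRight ℂ γ).comp (D b))
      = ∑ k : Fin n, τ.comp ((LinearMap.mulRight ℂ (b k)).comp (Θ k γ)) := by
    apply ext_mono
    intro l
    simp only [LinearMap.sum_apply, LinearMap.comp_apply, LinearMap.mulRight_apply]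
    rw [hD, Finset.sum_mul, map_sum]
    have hterm : ∀ p : Fin l.length,
        τ (mono (l.take p.val) * b (l.get p) * mono (l.drop (p.val + 1)) * γ)
          = τ (mono (l.drop (p.val + 1)) * γ * mono (l.take p.val) * b (l.get p)) := by
      intro p
      rw [mul_assoc (mono (l.take p.val) * b (l.get p)), htr, ← mul_assoc, mul_assoc]
    rw [Finset.sum_congr rfl (fun p _ => hterm p)]
    have : ∀ k : Fin n, τ (Θ k γ (mono l) * b k)
        = ∑ p : Fin l.length,
            if l.get p = k then
              τ (mono (l.drop (p.val + 1)) * γ * mono (l.take p.val) * b k) else 0 := by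
      intro k
      rw [hΘ, Finset.sum_mul, map_sum]
      exact Finset.sum_congr rfl fun p _ => by
        split <;> simp
    rw [Finset.sum_congr rfl (fun k _ => this k), Finset.sum_comm]
    simp only [Finset.sum_ite_eq, Finset.mem_univ, if_true]
  have := LinearMap.congr_fun e α
  simpa using this

/-- Lemma 1, main identity: for a tracial functional `τ` and
`a, b, c ∈ Aⁿ` with `a` divergence-free for `τ`,
`Σ_j τ((D_a b_j)·c_j) − Σ_j τ((D_b a_j)·c_j)
   = −Σ_k τ((D_a c_k + Σ_j Θ_{k,c_j}(a_j))·b_k)`,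
where `Θ_{k,c} = m_c ∘ ∼ ∘ ∂_k`. -/
theorem stmt17 {n : ℕ} (hn : 1 ≤ n)
    (τ : FA n →ₗ[ℂ] ℂ) (htr : ∀ P Q : FA n, τ (P * Q) = τ (Q * P))
    (δ : Fin n → (FA n →ₗ[ℂ] FA n))
    (hδ : ∀ (j : Fin n) (l : List (Fin n)),
      δ j (mono l) = ∑ k : Fin l.length,
        if l.get k = j then mono (l.drop (k.val + 1)) * mono (l.take k.val) else 0)
    (D : (Fin n → FA n) → (FA n →ₗ[ℂ] FA n))
    (hD : ∀ (b : Fin n → FA n) (l : List (Fin n)),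
      D b (mono l) = ∑ k : Fin l.length,
        mono (l.take k.val) * b (l.get k) * mono (l.drop (k.val + 1)))
    (Θ : Fin n → FA n → (FA n →ₗ[ℂ] FA n))
    (hΘ : ∀ (k : Fin n) (c : FA n) (l : List (Fin n)),
      Θ k c (mono l) = ∑ p : Fin l.length,
        if l.get p = k then mono (l.drop (p.val + 1)) * c * mono (l.take p.val) else 0)
    (a b c : Fin n → FA n)
    (ha : ∀ R : FA n, ∑ j : Fin n, τ (a j * δ j R) = 0) :
    ∑ j : Fin n, τ (D a (b j) * c j) - ∑ j : Fin n, τ (D b (a j) * c j)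
      = - ∑ k : Fin n, τ ((D a (c k) + ∑ j : Fin n, Θ k (c j) (a j)) * b k) := by
  have hA : ∀ R : FA n, τ (D a R) = 0 := tau_D_zero τ htr δ hδ D hD a ha
  have h2 : ∀ k : Fin n, τ (D a (b k) * c k) = - τ (D a (c k) * b k) := by
    intro k
    have h0 := hA (b k * c k)
    rw [D_mul D hD a (b k) (c k), map_add] at h0
    have h1 : τ (b k * D a (c k)) = τ (D a (c k) * b k) := htr _ _
    linear_combination h0 - h1
  have h3 : ∀ j : Fin n, τ (D b (a j) * c j) = ∑ k : Fin n, τ (Θ k (c j) (a j) * b k) :=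
    fun j => tau_Db_theta τ htr D hD Θ hΘ b (c j) (a j)
  rw [Finset.sum_congr rfl fun j _ => h2 j, Finset.sum_congr rfl fun j _ => h3 j]
  have hc : ∑ j : Fin n, ∑ k : Fin n, τ (Θ k (c j) (a j) * b k)
      = ∑ k : Fin n, ∑ j : Fin n, τ (Θ k (c j) (a j) * b k) := Finset.sum_comm
  rw [hc]
  simp only [add_mul, map_add, Finset.sum_mul, map_sum, Finset.sum_add_distrib,
    Finset.sum_neg_distrib]
  ring
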